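/- Let C ≥ 2 and let p : Fin C → ℝ be a probability vector (p i ≥ 0 for all i and ∑ i, p i = 1). Define p̃ i = (1 - p i)/(C - 1) and q i = (p i + p̃ i)/2. Then the total variation distance of q to the uniform distribution u (u i = 1/C for all i) is at most that of p: (1/2) * ∑ i, |q i - 1/C| ≤ (1/2) * ∑ i, |p i - 1/C|, and in fact ∑ i, |q i - 1/C| = ((C-2)/(2*(C-1))) * ∑ i, |p i - 1/C|. -/
import Mathlib


/-- Regression toward the mean in total variation: the mixture `q = (p + p̃)/2`
is at least as close to uniform as `p`, with an exact contraction factor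
`(C-2)/(2*(C-1))`. -/
theorem mixture_tv_contraction (C : ℕ) (hC : 2 ≤ C) (p : Fin C → ℝ)
    (hp : ∀ i, 0 ≤ p i) (hsum : ∑ i, p i = 1) :
    (1 / 2) * ∑ i, |(p i + (1 - p i) / ((C : ℝ) - 1)) / 2 - 1 / C| ≤
        (1 / 2) * ∑ i, |p i - 1 / C| ∧
      ∑ i, |(p i + (1 - p i) / ((C : ℝ) - 1)) / 2 - 1 / C| =
        (((C : ℝ) - 2) / (2 * ((C : ℝ) - 1))) * ∑ i, |p i - 1 / C| := by
  have hC2 : (2 : ℝ) ≤ (C : ℝ) := by exact_mod_cast hC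
  have hC1 : (C : ℝ) - 1 ≠ 0 := by linarith
  have hC0 : (C : ℝ) ≠ 0 := by positivity
  have hfac0 : 0 ≤ ((C : ℝ) - 2) / (2 * ((C : ℝ) - 1)) := by
    apply div_nonneg <;> linarith
  have hkey : ∀ i, |(p i + (1 - p i) / ((C : ℝ) - 1)) / 2 - 1 / C| =
      (((C : ℝ) - 2) / (2 * ((C : ℝ) - 1))) * |p i - 1 / C| := by
    intro i
    rw [← abs_of_nonneg hfac0, ← abs_mul]
    congr 1
    field_simp
    ring
  have heq : ∑ i, |(p i + (1 - p i) / ((C : ℝ) - 1)) / 2 - 1 / C| =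
      (((C : ℝ) - 2) / (2 * ((C : ℝ) - 1))) * ∑ i, |p i - 1 / C| := by
    rw [Finset.mul_sum]
    exact Finset.sum_congr rfl fun i _ => hkey i
  refine ⟨?_, heq⟩
  rw [heq]
  have hle : ((C : ℝ) - 2) / (2 * ((C : ℝ) - 1)) ≤ 1 := by
    rw [div_le_one (by linarith)]; linarith
  have hs : 0 ≤ ∑ i, |p i - 1 / C| := Finset.sum_nonneg fun i _ => abs_nonneg _
  nlinarith [mul_le_of_le_one_left hs hle]
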